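/- arXiv:1203.5547 — 2 statements merged into one kernel-verified Lean document; each statement's English description precedes it below -/
import Mathlib

section
/- Let B₁, B₂ ∈ M₂(ℂ) be invertible density matrices and let t > 0 be a real number satisfying det B₁ = det(t·B₂). Then det(B₁ + t·B₂) − |det(B₁ − t·B₂)| = 4t·det(√B₁ · √B₂). -/
open Matrix
open scoped ComplexOrder

/-- The positive semidefinite square root, as defined in Mathlib (Dec 2024). -/
noncomputable def Matrix.PosSemidef.sqrt {n 𝕜 : Type*} [Fintype n] [DecidableEq n] [RCLike 𝕜]
    {A : Matrix n n 𝕜} (hA : A.PosSemidef) : Matrix n n 𝕜 :=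
  hA.1.eigenvectorUnitary.1 * diagonal ((↑) ∘ (√·) ∘ hA.1.eigenvalues) *
  (star hA.1.eigenvectorUnitary : Matrix n n 𝕜)

lemma Matrix.PosSemidef.posSemidef_sqrt {n 𝕜 : Type*} [Fintype n] [DecidableEq n] [RCLike 𝕜]
    {A : Matrix n n 𝕜} (hA : A.PosSemidef) : hA.sqrt.PosSemidef := by
  have hD : (diagonal ((↑) ∘ (√·) ∘ hA.1.eigenvalues) : Matrix n n 𝕜).PosSemidef :=
    posSemidef_diagonal_iff.mpr (fun i => by simp [Real.sqrt_nonneg])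
  have := hD.mul_mul_conjTranspose_same (hA.1.eigenvectorUnitary : Matrix n n 𝕜)
  unfold Matrix.PosSemidef.sqrt
  simpa [Unitary.coe_star, star_eq_conjTranspose] using this

lemma Matrix.PosSemidef.sqrt_mul_self {n 𝕜 : Type*} [Fintype n] [DecidableEq n] [RCLike 𝕜]
    {A : Matrix n n 𝕜} (hA : A.PosSemidef) : hA.sqrt * hA.sqrt = A := by
  have hU : (star hA.1.eigenvectorUnitary : Matrix n n 𝕜) * hA.1.eigenvectorUnitary = 1 :=
    Unitary.coe_star_mul_self _
  unfold Matrix.PosSemidef.sqrt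
  conv_rhs => rw [hA.1.spectral_theorem, Unitary.conjStarAlgAut_apply]
  calc _ = (hA.1.eigenvectorUnitary : Matrix n n 𝕜) * (diagonal ((↑) ∘ (√·) ∘ hA.1.eigenvalues)
        * ((star hA.1.eigenvectorUnitary : Matrix n n 𝕜) * (hA.1.eigenvectorUnitary : Matrix n n 𝕜))
        * diagonal ((↑) ∘ (√·) ∘ hA.1.eigenvalues)) * (star hA.1.eigenvectorUnitary : Matrix n n 𝕜) := by
          simp only [mul_assoc]
    _ = _ := by
      rw [hU, mul_one, diagonal_mul_diagonal]
      congr 3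
      funext i
      simp only [Function.comp_apply]
      rw [← RCLike.ofReal_mul, Real.mul_self_sqrt (hA.eigenvalues_nonneg i)]

lemma my_det_nonneg {n : ℕ} {M : Matrix (Fin n) (Fin n) ℂ} (hM : M.PosSemidef) : 0 ≤ M.det := by
  rw [hM.isHermitian.det_eq_prod_eigenvalues]
  refine Finset.prod_nonneg fun i _ => ?_
  have := hM.eigenvalues_nonneg i
  simp only [RCLike.ofReal_nonneg] at *
  exact_mod_cast this

lemma my_diag_nonneg {n : ℕ} {M : Matrix (Fin n) (Fin n) ℂ} (hM : M.PosSemidef) (i : Fin n) :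
    0 ≤ M i i := by
  exact hM.diag_nonneg

lemma key_ineq (a d a' d' k p q p' q' : ℝ) (ha : 0 ≤ a) (hd : 0 ≤ d) (ha' : 0 ≤ a')
    (hd' : 0 ≤ d') (hk : 0 ≤ k) (h1 : a*d = p^2+q^2+k) (h2 : a'*d' = p'^2+q'^2+k) :
    (a-a')*(d-d') ≤ (p-p')^2+(q-q')^2 := by
  nlinarith [sq_nonneg (a*d' - a'*d), sq_nonneg (p*q' - p'*q), mul_nonneg hk (sq_nonneg (p+p')),
    mul_nonneg hk (sq_nonneg (q+q')), mul_nonneg (mul_nonneg ha hd') (mul_nonneg ha' hd),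
    mul_nonneg ha hd', mul_nonneg ha' hd,
    sq_nonneg (a*d' + a'*d - 2*(k - p*p' - q*q'))]

set_option maxHeartbeats 1000000 in
/-- For invertible qubit density matrices `B₁, B₂` and `t > 0` with `det B₁ = det (t B₂)`,
`det(B₁ + t B₂) - |det(B₁ - t B₂)| = 4 t det(√B₁ √B₂)`. -/
theorem stmt_5 (B₁ B₂ : Matrix (Fin 2) (Fin 2) ℂ)
    (hB₁ : B₁.PosSemidef) (hB₁t : B₁.trace = 1) (hB₁inv : IsUnit B₁.det)
    (hB₂ : B₂.PosSemidef) (hB₂t : B₂.trace = 1) (hB₂inv : IsUnit B₂.det)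
    (t : ℝ) (ht : 0 < t) (hdet : B₁.det = ((t : ℂ) • B₂).det) :
    (B₁ + (t : ℂ) • B₂).det - (‖(B₁ - (t : ℂ) • B₂).det‖ : ℂ) =
      (4 * t : ℂ) * (hB₁.sqrt * hB₂.sqrt).det := by
  have h110 := (hB₁.1.apply 1 0).symm
  have h210 := (hB₂.1.apply 1 0).symm
  obtain ⟨ha1, ha1i⟩ := Complex.nonneg_iff.mp (my_diag_nonneg hB₁ 0)
  obtain ⟨hd1, hd1i⟩ := Complex.nonneg_iff.mp (my_diag_nonneg hB₁ 1)
  obtain ⟨ha2, ha2i⟩ := Complex.nonneg_iff.mp (my_diag_nonneg hB₂ 0)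
  obtain ⟨hd2, hd2i⟩ := Complex.nonneg_iff.mp (my_diag_nonneg hB₂ 1)
  replace ha1i := ha1i.symm; replace hd1i := hd1i.symm
  replace ha2i := ha2i.symm; replace hd2i := hd2i.symm
  obtain ⟨hk, hki⟩ := Complex.nonneg_iff.mp (my_det_nonneg hB₁)
  replace hki := hki.symm
  obtain ⟨hk2, hk2i⟩ := Complex.nonneg_iff.mp (my_det_nonneg hB₂)
  replace hk2i := hk2i.symm
  have e1 : B₁.det = B₁ 0 0 * B₁ 1 1 - B₁ 0 1 * B₁ 1 0 := Matrix.det_fin_two B₁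
  have e2 : B₂.det = B₂ 0 0 * B₂ 1 1 - B₂ 0 1 * B₂ 1 0 := Matrix.det_fin_two B₂
  have hkre : B₁.det.re = (B₁ 0 0).re * (B₁ 1 1).re - ((B₁ 0 1).re^2 + (B₁ 0 1).im^2) := by
    have := congrArg Complex.re e1
    simp [h110, Complex.mul_re, hd1i, ha1i] at this
    rw [this]; ring
  have hk2re : B₂.det.re = (B₂ 0 0).re * (B₂ 1 1).re - ((B₂ 0 1).re^2 + (B₂ 0 1).im^2) := by
    have := congrArg Complex.re e2
    simp [h210, Complex.mul_re, hd2i, ha2i] at this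
    rw [this]; ring
  have hdet' : B₁.det = ((t^2 : ℝ):ℂ) * B₂.det := by
    rw [hdet, Matrix.det_smul]; push_cast; norm_num
  have hkk2 : B₁.det.re = t^2 * B₂.det.re := by
    have := congrArg Complex.re hdet'
    rw [Complex.mul_re, Complex.ofReal_re, Complex.ofReal_im, hk2i] at this
    simpa using this
  -- the difference determinant
  set z : ℂ := (B₁ - (t : ℂ) • B₂).det with hz
  have hz' : z = (B₁ 0 0 - t * B₂ 0 0) * (B₁ 1 1 - t * B₂ 1 1)
      - (B₁ 0 1 - t * B₂ 0 1) * (B₁ 1 0 - t * B₂ 1 0) := by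
    rw [hz, Matrix.det_fin_two]; simp [Matrix.sub_apply, Matrix.smul_apply]
  have hzim : z.im = 0 := by
    have := congrArg Complex.im hz'
    simp [h110, h210, Complex.mul_im, Complex.sub_im, Complex.sub_re, Complex.mul_re,
      ha1i, hd1i, ha2i, hd2i] at this
    rw [this]; ring
  have hzre : z.re ≤ 0 := by
    have hre : z.re = ((B₁ 0 0).re - t*(B₂ 0 0).re) * ((B₁ 1 1).re - t*(B₂ 1 1).re)
        - (((B₁ 0 1).re - t*(B₂ 0 1).re)^2 + ((B₁ 0 1).im - t*(B₂ 0 1).im)^2) := by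
      have := congrArg Complex.re hz'
      simp [h110, h210, Complex.mul_re, Complex.sub_re, Complex.sub_im, Complex.mul_im,
        ha1i, hd1i, ha2i, hd2i] at this
      rw [this]; ring
    rw [hre]
    have := key_ineq (B₁ 0 0).re (B₁ 1 1).re (t*(B₂ 0 0).re) (t*(B₂ 1 1).re) B₁.det.re
      (B₁ 0 1).re (B₁ 0 1).im (t*(B₂ 0 1).re) (t*(B₂ 0 1).im) ha1 hd1
      (by positivity) (by positivity) hk (by rw [hkre]; ring)
      (by rw [hkk2, hk2re]; ring)
    linarith
  -- |z| = -z
  have hzr : z = (z.re : ℂ) := Complex.ext rfl (by simp [hzim])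
  have habs : (‖z‖ : ℂ) = -z := by
    rw [hzr]; simp [Complex.norm_real, abs_of_nonpos hzre]
  rw [habs, sub_neg_eq_add]
  -- polarization
  have hpolar : (B₁ + (t : ℂ) • B₂).det + z = 2 * B₁.det + 2 * ((t:ℂ) • B₂).det := by
    rw [hz]
    simp only [Matrix.det_fin_two, Matrix.add_apply, Matrix.sub_apply, Matrix.smul_apply,
      smul_eq_mul]
    ring
  rw [hpolar, ← hdet]
  -- reduce both sides using det values
  obtain ⟨hu, hui⟩ := Complex.nonneg_iff.mp (my_det_nonneg hB₁.posSemidef_sqrt)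
  obtain ⟨hv, hvi⟩ := Complex.nonneg_iff.mp (my_det_nonneg hB₂.posSemidef_sqrt)
  have hur : hB₁.sqrt.det = ((hB₁.sqrt.det.re : ℝ) : ℂ) := Complex.ext rfl (by simp [hui.symm])
  have hvr : hB₂.sqrt.det = ((hB₂.sqrt.det.re : ℝ) : ℂ) := Complex.ext rfl (by simp [hvi.symm])
  have hkr : B₁.det = ((B₁.det.re : ℝ) : ℂ) := Complex.ext rfl (by simp [hki])
  have hk2r : B₂.det = ((B₂.det.re : ℝ) : ℂ) := Complex.ext rfl (by simp [hk2i])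
  set u : ℝ := hB₁.sqrt.det.re
  set v : ℝ := hB₂.sqrt.det.re
  have hu2 : (u:ℂ)^2 = B₁.det := by rw [← hur, sq, ← Matrix.det_mul, hB₁.sqrt_mul_self]
  have hv2 : (v:ℂ)^2 = B₂.det := by rw [← hvr, sq, ← Matrix.det_mul, hB₂.sqrt_mul_self]
  have hu2' : u^2 = B₁.det.re := by exact_mod_cast hu2.trans hkr
  have hv2' : v^2 = B₂.det.re := by exact_mod_cast hv2.trans hk2r
  have huv : u = t * v := by
    have h0 : (u - t*v)*(u + t*v) = 0 := by
      linear_combination hu2' - (t^2)*hv2' + hkk2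
    rcases mul_eq_zero.mp h0 with h | h
    · linarith
    · have htv : 0 ≤ t * v := mul_nonneg ht.le hv
      linarith
  have hfin : B₁.det.re = t * u * v := by nlinarith
  rw [Matrix.det_mul, hur, hvr, hkr]
  push_cast
  rw [hfin]
  push_cast
  ring
end

section
/- Let x₁,…,x_k ∈ ℂⁿ be unit vectors and B₁,…,B_k ∈ M_m(ℂ) be density matrices. If there exists a trace-preserving completely positive map T : M_n(ℂ) → M_m(ℂ) with T(x_ix_iᴴ) = B_i for i = 1,…,k, then |x_iᴴx_j| ≤ ‖√B_i · √B_j‖₁ for all i, j = 1,…,k. -/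
open Matrix Polynomial
open scoped ComplexOrder

/-- The trace norm of a complex matrix: `tr √(XᴴX)`, the sum of singular values. -/
noncomputable def traceNorm {p q : ℕ} (X : Matrix (Fin p) (Fin q) ℂ) : ℝ :=
  ((Matrix.posSemidef_conjTranspose_mul_self X).sqrt.trace).re

section Aux

variable {ι κ : Type*} [Fintype ι] [Fintype κ] [DecidableEq ι] [DecidableEq κ]

lemma my_charpoly_eval (M : Matrix ι ι ℂ) (z : ℂ) :
    M.charpoly.eval z = det (z • (1 : Matrix ι ι ℂ) - M) := by
  rw [Matrix.charpoly, eval_det, matPolyEquiv_charmatrix]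
  congr 1
  rw [eval_sub, eval_X, eval_C]
  congr 1
  ext a b
  simp [Matrix.scalar_apply, Matrix.smul_apply, Matrix.one_apply, Matrix.diagonal_apply]

lemma my_charpoly_mul_comm (A : Matrix ι κ ℂ) (B : Matrix κ ι ℂ) :
    (A * B).charpoly * X ^ (Fintype.card κ) = (B * A).charpoly * X ^ (Fintype.card ι) := by
  have hc : ((A * B).charpoly * X ^ (Fintype.card κ)) * X
      = ((B * A).charpoly * X ^ (Fintype.card ι)) * X := by
    apply Polynomial.funext
    intro z
    rcases eq_or_ne z 0 with rfl | hz
    · simp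
    · simp only [eval_mul, eval_pow, eval_X, my_charpoly_eval]
      have h1 : z • (1 : Matrix ι ι ℂ) - A * B
          = z • ((1 : Matrix ι ι ℂ) - A * (z⁻¹ • B)) := by
        rw [smul_sub, Matrix.mul_smul, smul_smul, mul_inv_cancel₀ hz, one_smul]
      have h2 : z • (1 : Matrix κ κ ℂ) - B * A
          = z • ((1 : Matrix κ κ ℂ) - (z⁻¹ • B) * A) := by
        rw [smul_sub, Matrix.smul_mul, smul_smul, mul_inv_cancel₀ hz, one_smul]
      rw [h1, h2, det_smul, det_smul, det_one_sub_mul_comm]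
      ring
  exact mul_right_cancel₀ X_ne_zero hc

lemma my_charpoly_hermitian {H : Matrix ι ι ℂ} (hH : H.IsHermitian) :
    H.charpoly = ∏ i, (X - C ((hH.eigenvalues i : ℝ) : ℂ)) := by
  apply Polynomial.funext
  intro z
  rw [my_charpoly_eval]
  have hWW : (hH.eigenvectorUnitary : Matrix ι ι ℂ) * star (hH.eigenvectorUnitary : Matrix ι ι ℂ)
      = 1 := (Matrix.mem_unitaryGroup_iff).mp hH.eigenvectorUnitary.2
  have hWW' : star (hH.eigenvectorUnitary : Matrix ι ι ℂ) * (hH.eigenvectorUnitary : Matrix ι ι ℂ)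
      = 1 := (Matrix.mem_unitaryGroup_iff').mp hH.eigenvectorUnitary.2
  have key : z • (1 : Matrix ι ι ℂ) - H
      = (hH.eigenvectorUnitary : Matrix ι ι ℂ)
        * (z • (1 : Matrix ι ι ℂ) - diagonal (RCLike.ofReal ∘ hH.eigenvalues))
        * star (hH.eigenvectorUnitary : Matrix ι ι ℂ) := by
    conv_lhs => rw [hH.spectral_theorem, Unitary.conjStarAlgAut_apply]
    rw [Matrix.mul_sub, Matrix.sub_mul, Matrix.mul_smul, Matrix.mul_one, Matrix.smul_mul, hWW]
  rw [key, det_mul, det_mul]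
  have hre : ((hH.eigenvectorUnitary : Matrix ι ι ℂ)).det
        * (z • (1 : Matrix ι ι ℂ) - diagonal (RCLike.ofReal ∘ hH.eigenvalues)).det
        * (star (hH.eigenvectorUnitary : Matrix ι ι ℂ)).det
      = (z • (1 : Matrix ι ι ℂ) - diagonal (RCLike.ofReal ∘ hH.eigenvalues)).det
        * ((star (hH.eigenvectorUnitary : Matrix ι ι ℂ)).det
            * ((hH.eigenvectorUnitary : Matrix ι ι ℂ)).det) := by ring
  rw [hre, ← det_mul, hWW', det_one, mul_one]
  rw [smul_one_eq_diagonal, diagonal_sub, det_diagonal]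
  simp [eval_prod]

end Aux

section Aux2

variable {ι κ : Type*} [Fintype ι] [Fintype κ] [DecidableEq ι] [DecidableEq κ]

lemma my_sum_sqrt_of_charpoly {M : Matrix ι ι ℂ} {N : Matrix κ κ ℂ}
    (hM : M.IsHermitian) (hN : N.IsHermitian)
    (h : M.charpoly * X ^ (Fintype.card κ) = N.charpoly * X ^ (Fintype.card ι)) :
    ∑ i, Real.sqrt (hM.eigenvalues i) = ∑ i, Real.sqrt (hN.eigenvalues i) := by
  rw [my_charpoly_hermitian hM, my_charpoly_hermitian hN] at h
  have e1 : ∏ i, (X - C ((hM.eigenvalues i : ℝ) : ℂ))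
      = ((Finset.univ.val.map fun i => ((hM.eigenvalues i : ℝ) : ℂ)).map
          fun a => X - C a).prod := by
    rw [Multiset.map_map]; rfl
  have e2 : ∏ i, (X - C ((hN.eigenvalues i : ℝ) : ℂ))
      = ((Finset.univ.val.map fun i => ((hN.eigenvalues i : ℝ) : ℂ)).map
          fun a => X - C a).prod := by
    rw [Multiset.map_map]; rfl
  have hne1 : (∏ i, (X - C ((hM.eigenvalues i : ℝ) : ℂ))) ≠ 0 :=
    (monic_prod_of_monic _ _ fun i _ => monic_X_sub_C _).ne_zero
  have hne2 : (∏ i, (X - C ((hN.eigenvalues i : ℝ) : ℂ))) ≠ 0 :=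
    (monic_prod_of_monic _ _ fun i _ => monic_X_sub_C _).ne_zero
  have hroots := congrArg Polynomial.roots h
  rw [Polynomial.roots_mul (mul_ne_zero hne1 (pow_ne_zero _ Polynomial.X_ne_zero)),
      Polynomial.roots_mul (mul_ne_zero hne2 (pow_ne_zero _ Polynomial.X_ne_zero)),
      roots_X_pow, roots_X_pow, e1, e2,
      Polynomial.roots_multiset_prod_X_sub_C, Polynomial.roots_multiset_prod_X_sub_C] at hroots
  have hsum := congrArg
    (fun s : Multiset ℂ => (s.map fun z : ℂ => Real.sqrt z.re).sum) hroots
  simp only [Multiset.map_add, Multiset.sum_add, Multiset.nsmul_singleton,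
    Multiset.map_replicate, Complex.zero_re, Real.sqrt_zero, Multiset.sum_replicate,
    smul_zero, add_zero, Multiset.map_map] at hsum
  have f1 : ((fun z : ℂ => Real.sqrt z.re) ∘ fun i => ((hM.eigenvalues i : ℝ) : ℂ))
      = fun i => Real.sqrt (hM.eigenvalues i) := by
    funext i; simp
  have f2 : ((fun z : ℂ => Real.sqrt z.re) ∘ fun i => ((hN.eigenvalues i : ℝ) : ℂ))
      = fun i => Real.sqrt (hN.eigenvalues i) := by
    funext i; simp
  rw [f1, f2] at hsum
  exact hsum

lemma my_sum_sqrt_comm (A : Matrix ι κ ℂ) :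
    ∑ r, Real.sqrt ((Matrix.posSemidef_conjTranspose_mul_self A).1.eigenvalues r)
      = ∑ r, Real.sqrt ((Matrix.posSemidef_self_mul_conjTranspose A).1.eigenvalues r) := by
  refine my_sum_sqrt_of_charpoly _ _ ?_
  simpa using my_charpoly_mul_comm Aᴴ A

lemma my_sum_sqrt_congr {M N : Matrix ι ι ℂ} (hM : M.IsHermitian) (hN : N.IsHermitian)
    (h : M = N) :
    ∑ r, Real.sqrt (hM.eigenvalues r) = ∑ r, Real.sqrt (hN.eigenvalues r) := by
  subst h; rfl

end Aux2

section Aux3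

variable {ι : Type*} [Fintype ι] [DecidableEq ι]

lemma my_trace_sqrt {M : Matrix ι ι ℂ} (hM : M.PosSemidef) :
    hM.sqrt.trace = ((∑ i, Real.sqrt (hM.1.eigenvalues i) : ℝ) : ℂ) := by
  rw [Matrix.PosSemidef.sqrt, Matrix.trace_mul_cycle]
  rw [(Matrix.mem_unitaryGroup_iff').mp hM.1.eigenvectorUnitary.2, Matrix.one_mul,
    Matrix.trace_diagonal]
  push_cast
  rfl

lemma my_abs_trace_le (Xm : Matrix ι ι ℂ) :
    ‖Xm.trace‖
      ≤ ∑ r, Real.sqrt ((Matrix.posSemidef_conjTranspose_mul_self Xm).1.eigenvalues r) := by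
  set h : (Xmᴴ * Xm).IsHermitian := (Matrix.posSemidef_conjTranspose_mul_self Xm).1 with hh
  set W : Matrix ι ι ℂ := (h.eigenvectorUnitary : Matrix ι ι ℂ) with hW
  have hWW : W * star W = 1 := (Matrix.mem_unitaryGroup_iff).mp h.eigenvectorUnitary.2
  set Y : Matrix ι ι ℂ := star W * Xm * W with hY
  have htr : Y.trace = Xm.trace := by
    rw [hY, Matrix.trace_mul_cycle, hWW, Matrix.one_mul]
  have hWW2 : W * Wᴴ = 1 := by rw [← Matrix.star_eq_conjTranspose]; exact hWW
  have hdiag : Yᴴ * Y = diagonal (RCLike.ofReal ∘ h.eigenvalues) := by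
    have e : Yᴴ * Y = star W * (Xmᴴ * Xm) * W := by
      rw [hY]
      simp only [Matrix.conjTranspose_mul, Matrix.star_eq_conjTranspose,
        Matrix.conjTranspose_conjTranspose, Matrix.mul_assoc]
      rw [show W * (Wᴴ * (Xm * W)) = Xm * W from by
        rw [← Matrix.mul_assoc, hWW2, Matrix.one_mul]]
    rw [e]
    have := h.conjStarAlgAut_star_eigenvectorUnitary
    rw [Unitary.conjStarAlgAut_star_apply] at this
    exact this
  have step1 : ‖Y.trace‖ ≤ ∑ i, ‖Y i i‖ := by
    rw [Matrix.trace]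
    exact norm_sum_le _ _
  have step2 : ∀ i, ‖Y i i‖ ≤ Real.sqrt (h.eigenvalues i) := by
    intro i
    have h1 : ((Yᴴ * Y) i i).re = ∑ j, Complex.normSq (Y j i) := by
      simp [Matrix.mul_apply, Matrix.conjTranspose_apply, Complex.re_sum, ← Complex.normSq_eq_conj_mul_self]
    have h2 : Complex.normSq (Y i i) ≤ ((Yᴴ * Y) i i).re := by
      rw [h1]
      exact Finset.single_le_sum (f := fun j => Complex.normSq (Y j i))
        (fun j _ => Complex.normSq_nonneg _) (Finset.mem_univ i)
    have h3 : ((Yᴴ * Y) i i).re = h.eigenvalues i := by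
      rw [hdiag]; simp
    rw [Complex.norm_def]
    exact Real.sqrt_le_sqrt (by rw [← h3]; exact h2)
  calc ‖Xm.trace‖ = ‖Y.trace‖ := by rw [htr]
    _ ≤ ∑ i, ‖Y i i‖ := step1
    _ ≤ ∑ i, Real.sqrt (h.eigenvalues i) := Finset.sum_le_sum fun i _ => step2 i

end Aux3

section Aux4

lemma my_conj_vecMulVec {ι κ : Type*} [Fintype ι] [Fintype κ]
    (G : Matrix ι κ ℂ) (v : κ → ℂ) :
    G * vecMulVec v (star v) * Gᴴ = vecMulVec (G *ᵥ v) (star (G *ᵥ v)) := by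
  ext a b
  simp only [Matrix.mul_apply, Matrix.vecMulVec_apply, Matrix.conjTranspose_apply,
    Matrix.mulVec, dotProduct, Pi.star_apply]
  rw [show (star (∑ d, G b d * v d) : ℂ) = ∑ d, star (G b d) * star (v d) by
    rw [star_sum]; exact Finset.sum_congr rfl fun d _ => star_mul' _ _]
  rw [Finset.sum_mul_sum]
  rw [Finset.sum_comm]
  refine Finset.sum_congr rfl fun d _ => ?_
  rw [Finset.sum_mul]
  refine Finset.sum_congr rfl fun c _ => ?_
  ring

lemma my_dot_sum_mulVec {ι : Type*} [Fintype ι] {σ : Type*} [Fintype σ]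
    (M : σ → Matrix ι ι ℂ) (v w : ι → ℂ) :
    ∑ r, v ⬝ᵥ (M r *ᵥ w) = v ⬝ᵥ ((∑ r, M r) *ᵥ w) := by
  simp only [dotProduct, Matrix.mulVec, Matrix.sum_apply, Finset.mul_sum,
    Finset.sum_mul]
  rw [Finset.sum_comm]
  exact Finset.sum_congr rfl fun a _ => Finset.sum_comm

lemma my_traceNorm_eq {p q : ℕ} (X : Matrix (Fin p) (Fin q) ℂ) :
    ((Matrix.posSemidef_conjTranspose_mul_self X).sqrt.trace).re
      = ∑ r, Real.sqrt ((Matrix.posSemidef_conjTranspose_mul_self X).1.eigenvalues r) := by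
  rw [my_trace_sqrt]
  exact Complex.ofReal_re _

lemma my_sqrt_herm {ι : Type*} [Fintype ι] [DecidableEq ι] {A : Matrix ι ι ℂ}
    (hA : A.PosSemidef) : (hA.sqrt)ᴴ = hA.sqrt := by
  unfold Matrix.PosSemidef.sqrt
  rw [conjTranspose_mul, conjTranspose_mul, diagonal_conjTranspose, ← star_eq_conjTranspose,
    star_star, ← star_eq_conjTranspose, Matrix.mul_assoc]
  congr 2
  ext a b
  simp [diagonal_apply]

lemma my_sqrt_mul_self {ι : Type*} [Fintype ι] [DecidableEq ι] {A : Matrix ι ι ℂ}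
    (hA : A.PosSemidef) : hA.sqrt * hA.sqrt = A := by
  unfold Matrix.PosSemidef.sqrt
  have hWW' : star (hA.1.eigenvectorUnitary : Matrix ι ι ℂ) * (hA.1.eigenvectorUnitary : Matrix ι ι ℂ)
      = 1 := (Matrix.mem_unitaryGroup_iff').mp hA.1.eigenvectorUnitary.2
  have hD : diagonal (((↑) : ℝ → ℂ) ∘ (√·) ∘ hA.1.eigenvalues)
      * diagonal (((↑) : ℝ → ℂ) ∘ (√·) ∘ hA.1.eigenvalues)
      = diagonal (RCLike.ofReal ∘ hA.1.eigenvalues) := by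
    rw [diagonal_mul_diagonal]
    congr 1
    funext a
    simp only [Function.comp_apply]
    rw [← Complex.ofReal_mul, Real.mul_self_sqrt (hA.eigenvalues_nonneg a)]
    rfl
  conv_rhs => rw [hA.1.spectral_theorem, Unitary.conjStarAlgAut_apply]
  calc _ = (hA.1.eigenvectorUnitary : Matrix ι ι ℂ)
        * (diagonal (((↑) : ℝ → ℂ) ∘ (√·) ∘ hA.1.eigenvalues)
          * (star (hA.1.eigenvectorUnitary : Matrix ι ι ℂ) * (hA.1.eigenvectorUnitary : Matrix ι ι ℂ))
          * diagonal (((↑) : ℝ → ℂ) ∘ (√·) ∘ hA.1.eigenvalues))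
        * star (hA.1.eigenvectorUnitary : Matrix ι ι ℂ) := by
          simp only [Matrix.mul_assoc]; rfl
    _ = _ := by rw [hWW', Matrix.mul_one, hD]

end Aux4


/-- If a TPCP map sends the pure states `xᵢxᵢᴴ` to the density matrices `Bᵢ`, then the
fidelities satisfy `|xᵢᴴxⱼ| ≤ ‖√Bᵢ √Bⱼ‖₁` for all `i, j`. -/
theorem stmt_16 {n m k : ℕ} (x : Fin k → Fin n → ℂ)
    (hx : ∀ i, star (x i) ⬝ᵥ x i = 1)
    (B : Fin k → Matrix (Fin m) (Fin m) ℂ)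
    (hB : ∀ i, (B i).PosSemidef) (hBt : ∀ i, (B i).trace = 1)
    (hT : ∃ (t : ℕ) (F : Fin t → Matrix (Fin m) (Fin n) ℂ),
        (∑ j, (F j)ᴴ * F j = 1) ∧
        ∀ i, (∑ j, F j * vecMulVec (x i) (star (x i)) * (F j)ᴴ) = B i) :
    ∀ i j, ‖star (x i) ⬝ᵥ x j‖ ≤ traceNorm ((hB i).sqrt * (hB j).sqrt) := by
  unfold traceNorm
  obtain ⟨t, F, hsum, himg⟩ := hT
  intro i j
  set U : Matrix (Fin m) (Fin t) ℂ := Matrix.of (fun a r => (F r *ᵥ x i) a) with hU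
  set V : Matrix (Fin m) (Fin t) ℂ := Matrix.of (fun a r => (F r *ᵥ x j) a) with hV
  have himg' : ∀ l, ∑ r, vecMulVec (F r *ᵥ x l) (star (F r *ᵥ x l)) = B l := by
    intro l
    rw [← himg l]
    exact Finset.sum_congr rfl fun r _ => (my_conj_vecMulVec (F r) (x l)).symm
  have hUU : U * Uᴴ = B i := by
    rw [← himg' i]
    ext a b
    simp only [Matrix.mul_apply, Matrix.conjTranspose_apply, Matrix.sum_apply,
      Matrix.vecMulVec_apply, Pi.star_apply]
    rfl
  have hVV : V * Vᴴ = B j := by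
    rw [← himg' j]
    ext a b
    simp only [Matrix.mul_apply, Matrix.conjTranspose_apply, Matrix.sum_apply,
      Matrix.vecMulVec_apply, Pi.star_apply]
    rfl
  have htrace : (Uᴴ * V).trace = star (x i) ⬝ᵥ x j := by
    have hA : (Uᴴ * V).trace = ∑ r, star (F r *ᵥ x i) ⬝ᵥ (F r *ᵥ x j) := by
      rw [Matrix.trace]
      simp only [Matrix.diag_apply, Matrix.mul_apply, Matrix.conjTranspose_apply,
        Matrix.of_apply, dotProduct, Pi.star_apply, hU, hV]
    have h1 : ∀ r, star (F r *ᵥ x i) ⬝ᵥ (F r *ᵥ x j)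
        = star (x i) ⬝ᵥ (((F r)ᴴ * F r) *ᵥ x j) := by
      intro r
      calc star (F r *ᵥ x i) ⬝ᵥ (F r *ᵥ x j)
          = (star (x i) ᵥ* (F r)ᴴ) ⬝ᵥ (F r *ᵥ x j) := by rw [Matrix.star_mulVec]
        _ = star (x i) ⬝ᵥ ((F r)ᴴ *ᵥ (F r *ᵥ x j)) := (Matrix.dotProduct_mulVec _ _ _).symm
        _ = star (x i) ⬝ᵥ (((F r)ᴴ * F r) *ᵥ x j) := by rw [Matrix.mulVec_mulVec]
    rw [hA, Finset.sum_congr rfl fun r _ => h1 r, my_dot_sum_mulVec, hsum,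
      Matrix.one_mulVec]
  have hSiH : ((hB i).sqrt)ᴴ = (hB i).sqrt := my_sqrt_herm (hB i)
  have hSjH : ((hB j).sqrt)ᴴ = (hB j).sqrt := my_sqrt_herm (hB j)
  have eq1 : (Uᴴ * V)ᴴ * (Uᴴ * V) = ((hB i).sqrt * V)ᴴ * ((hB i).sqrt * V) := by
    rw [Matrix.conjTranspose_mul, Matrix.conjTranspose_mul, Matrix.conjTranspose_conjTranspose,
      hSiH]
    have hUU' : U * Uᴴ = (hB i).sqrt * (hB i).sqrt := hUU.trans (my_sqrt_mul_self (hB i)).symm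
    calc Vᴴ * U * (Uᴴ * V) = Vᴴ * (U * Uᴴ) * V := by
          simp only [Matrix.mul_assoc]
      _ = Vᴴ * ((hB i).sqrt * (hB i).sqrt) * V := by rw [hUU']
      _ = _ := by simp only [Matrix.mul_assoc]
  have eq2 : ((hB i).sqrt * V) * ((hB i).sqrt * V)ᴴ
      = ((hB i).sqrt * (hB j).sqrt) * ((hB i).sqrt * (hB j).sqrt)ᴴ := by
    rw [Matrix.conjTranspose_mul, hSiH, Matrix.conjTranspose_mul, hSiH, hSjH]
    have hVV' : V * Vᴴ = (hB j).sqrt * (hB j).sqrt := hVV.trans (my_sqrt_mul_self (hB j)).symm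
    calc (hB i).sqrt * V * (Vᴴ * (hB i).sqrt) = (hB i).sqrt * (V * Vᴴ) * (hB i).sqrt := by
          simp only [Matrix.mul_assoc]
      _ = (hB i).sqrt * ((hB j).sqrt * (hB j).sqrt) * (hB i).sqrt := by rw [hVV']
      _ = _ := by simp only [Matrix.mul_assoc]
  rw [← htrace, my_traceNorm_eq]
  calc ‖(Uᴴ * V).trace‖
      ≤ ∑ r, Real.sqrt ((Matrix.posSemidef_conjTranspose_mul_self (Uᴴ * V)).1.eigenvalues r) :=
        my_abs_trace_le _
    _ = ∑ r, Real.sqrt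
          ((Matrix.posSemidef_conjTranspose_mul_self ((hB i).sqrt * V)).1.eigenvalues r) :=
        my_sum_sqrt_congr _ _ eq1
    _ = ∑ r, Real.sqrt
          ((Matrix.posSemidef_self_mul_conjTranspose ((hB i).sqrt * V)).1.eigenvalues r) :=
        my_sum_sqrt_comm _
    _ = ∑ r, Real.sqrt
          ((Matrix.posSemidef_self_mul_conjTranspose
            ((hB i).sqrt * (hB j).sqrt)).1.eigenvalues r) :=
        my_sum_sqrt_congr _ _ eq2
    _ = ∑ r, Real.sqrt
          ((Matrix.posSemidef_conjTranspose_mul_self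
            ((hB i).sqrt * (hB j).sqrt)).1.eigenvalues r) :=
        (my_sum_sqrt_comm _).symm
end
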